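/- (Extended-Hamiltonian marginal) Let ℋ(s, p^s, V, p^V) = Σ_i V^{-2/3}|p_i^s|²/(2m_i) + (p^V)²/(2M) + U(V^{1/3}s; V) + PV. Then under the measure exp(−βℋ) ds dp^s dV dp^V, the marginal distribution of (r, p, V) with r_i = V^{1/3}s_i, p_i = V^{-1/3}p_i^s (after integrating out p^V) is proportional to exp(−β(Σ_i |p_i|²/(2m_i) + U(r;V) + PV)) dr dp dV, i.e., the correct NPT distribution. -/

import Mathlib

open MeasureTheory
open scoped ENNReal

private lemma aux_rpow_meas (e : ℝ) : Measurable fun x : ℝ => x ^ e :=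
  measurable_of_continuousOn_compl_singleton 0
    (fun x hx => (Real.continuousAt_rpow_const x e (Or.inl hx)).continuousWithinAt)

private lemma aux_scale {N : ℕ} (g : (Fin N → Fin 3 → ℝ) → ℝ≥0∞) (hg : Measurable g)
    {a : ℝ} (ha : a ≠ 0) :
    ∫⁻ x, g (a • x) =
      ENNReal.ofReal |(a ^ Module.finrank ℝ (Fin N → Fin 3 → ℝ))⁻¹| * ∫⁻ x, g x := by
  rw [← lintegral_map hg (measurable_const_smul a), Measure.map_addHaar_smul volume ha,
    lintegral_smul_measure, smul_eq_mul]

private lemma aux_scale2 {N : ℕ} (g : (Fin N → Fin 3 → ℝ) × (Fin N → Fin 3 → ℝ) → ℝ≥0∞)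
    (hg : Measurable g) {a : ℝ} (ha : 0 < a) :
    (∫⁻ s, ∫⁻ p, g (a • s, a⁻¹ • p)) = ∫⁻ s, ∫⁻ p, g (s, p) := by
  set d := Module.finrank ℝ (Fin N → Fin 3 → ℝ)
  have h1 : ∀ s, (∫⁻ p, g (a • s, a⁻¹ • p))
      = ENNReal.ofReal |((a⁻¹) ^ d)⁻¹| * ∫⁻ p, g (a • s, p) := fun s =>
    aux_scale (fun p => g (a • s, p)) (hg.comp measurable_prodMk_left) (inv_ne_zero ha.ne')
  simp only [h1]
  rw [lintegral_const_mul' _ _ ENNReal.ofReal_ne_top]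
  have h2 : (∫⁻ s, ∫⁻ p, g (a • s, p))
      = ENNReal.ofReal |(a ^ d)⁻¹| * ∫⁻ s, ∫⁻ p, g (s, p) :=
    aux_scale (fun s => ∫⁻ p, g (s, p))
      (Measurable.lintegral_prod_right (f := fun s p => g (s, p)) hg) ha.ne'
  rw [h2, ← mul_assoc, ← ENNReal.ofReal_mul (abs_nonneg _)]
  have had : (0:ℝ) < a ^ d := pow_pos ha d
  rw [abs_of_pos (by positivity), abs_of_pos (by positivity)]
  rw [inv_pow, inv_inv, mul_inv_cancel₀ had.ne', ENNReal.ofReal_one, one_mul]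

private lemma lhs_core {N : ℕ}
    (F : ((Fin N → Fin 3 → ℝ) × (Fin N → Fin 3 → ℝ)) × ℝ × ℝ → ℝ≥0∞) (hF : Measurable F) :
    (∫⁻ x in {x : ((Fin N → Fin 3 → ℝ) × (Fin N → Fin 3 → ℝ)) × ℝ × ℝ | 0 < x.2.1}, F x)
      = ∫⁻ V in Set.Ioi (0:ℝ), ∫⁻ sp : (Fin N → Fin 3 → ℝ) × (Fin N → Fin 3 → ℝ),
          ∫⁻ w : ℝ, F (sp, V, w) := by
  have hset : {x : ((Fin N → Fin 3 → ℝ) × (Fin N → Fin 3 → ℝ)) × ℝ × ℝ | 0 < x.2.1}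
      = (Set.univ : Set ((Fin N → Fin 3 → ℝ) × (Fin N → Fin 3 → ℝ))) ×ˢ
        ((Set.Ioi (0:ℝ)) ×ˢ (Set.univ : Set ℝ)) := by
    ext x; simp [Set.mem_prod]
  have h1 : (volume : Measure (ℝ × ℝ)).restrict ((Set.Ioi (0:ℝ)) ×ˢ (Set.univ : Set ℝ))
      = (volume.restrict (Set.Ioi (0:ℝ))).prod volume := by
    rw [Measure.volume_eq_prod, ← Measure.prod_restrict, Measure.restrict_univ]
  have h2 : (volume : Measure (((Fin N → Fin 3 → ℝ) × (Fin N → Fin 3 → ℝ)) × ℝ × ℝ)).restrict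
        ((Set.univ : Set ((Fin N → Fin 3 → ℝ) × (Fin N → Fin 3 → ℝ))) ×ˢ
          ((Set.Ioi (0:ℝ)) ×ˢ (Set.univ : Set ℝ)))
      = (volume : Measure ((Fin N → Fin 3 → ℝ) × (Fin N → Fin 3 → ℝ))).prod
          ((volume.restrict (Set.Ioi (0:ℝ))).prod volume) := by
    rw [Measure.volume_eq_prod, ← Measure.prod_restrict, Measure.restrict_univ, h1]
  rw [hset, h2, lintegral_prod F hF.aemeasurable]
  have hstep : (∫⁻ sp : (Fin N → Fin 3 → ℝ) × (Fin N → Fin 3 → ℝ),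
        ∫⁻ w2 : ℝ × ℝ, F (sp, w2) ∂((volume.restrict (Set.Ioi (0:ℝ))).prod volume))
      = ∫⁻ sp : (Fin N → Fin 3 → ℝ) × (Fin N → Fin 3 → ℝ),
          ∫⁻ V in Set.Ioi (0:ℝ), ∫⁻ w : ℝ, F (sp, V, w) := by
    refine lintegral_congr fun sp => ?_
    exact lintegral_prod (fun w2 => F (sp, w2))
      ((show Measurable fun w2 : ℝ × ℝ => F (sp, w2) from
        hF.comp measurable_prodMk_left).aemeasurable)
  rw [hstep]
  refine lintegral_lintegral_swap ?_
  refine Measurable.aemeasurable ?_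
  have : Measurable fun z : ((Fin N → Fin 3 → ℝ) × (Fin N → Fin 3 → ℝ)) × ℝ =>
      ∫⁻ w : ℝ, F (z.1, z.2, w) := by
    refine Measurable.lintegral_prod_right
      (f := fun (z : ((Fin N → Fin 3 → ℝ) × (Fin N → Fin 3 → ℝ)) × ℝ) (w : ℝ) =>
        F (z.1, z.2, w)) ?_
    exact hF.comp (measurable_fst.fst.prodMk (measurable_fst.snd.prodMk measurable_snd))
  exact this

private lemma rhs_core {N : ℕ}
    (G : (Fin N → Fin 3 → ℝ) × (Fin N → Fin 3 → ℝ) × ℝ → ℝ≥0∞) (hG : Measurable G) :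
    (∫⁻ y in {y : (Fin N → Fin 3 → ℝ) × (Fin N → Fin 3 → ℝ) × ℝ | 0 < y.2.2}, G y)
      = ∫⁻ V in Set.Ioi (0:ℝ), ∫⁻ s : Fin N → Fin 3 → ℝ, ∫⁻ p : Fin N → Fin 3 → ℝ,
          G (s, p, V) := by
  have hset : {y : (Fin N → Fin 3 → ℝ) × (Fin N → Fin 3 → ℝ) × ℝ | 0 < y.2.2}
      = (Set.univ : Set (Fin N → Fin 3 → ℝ)) ×ˢ
        ((Set.univ : Set (Fin N → Fin 3 → ℝ)) ×ˢ Set.Ioi (0:ℝ)) := by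
    ext y; simp [Set.mem_prod]
  have h1 : (volume : Measure ((Fin N → Fin 3 → ℝ) × ℝ)).restrict
        ((Set.univ : Set (Fin N → Fin 3 → ℝ)) ×ˢ Set.Ioi (0:ℝ))
      = (volume : Measure (Fin N → Fin 3 → ℝ)).prod (volume.restrict (Set.Ioi (0:ℝ))) := by
    rw [Measure.volume_eq_prod, ← Measure.prod_restrict, Measure.restrict_univ]
  have h2 : (volume : Measure ((Fin N → Fin 3 → ℝ) × (Fin N → Fin 3 → ℝ) × ℝ)).restrict
        ((Set.univ : Set (Fin N → Fin 3 → ℝ)) ×ˢ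
          ((Set.univ : Set (Fin N → Fin 3 → ℝ)) ×ˢ Set.Ioi (0:ℝ)))
      = (volume : Measure (Fin N → Fin 3 → ℝ)).prod
          ((volume : Measure (Fin N → Fin 3 → ℝ)).prod (volume.restrict (Set.Ioi (0:ℝ)))) := by
    rw [Measure.volume_eq_prod, ← Measure.prod_restrict, Measure.restrict_univ, h1]
  rw [hset, h2, lintegral_prod G hG.aemeasurable]
  have hstep : (∫⁻ s : Fin N → Fin 3 → ℝ,
        ∫⁻ q : (Fin N → Fin 3 → ℝ) × ℝ, G (s, q)
          ∂((volume : Measure (Fin N → Fin 3 → ℝ)).prod (volume.restrict (Set.Ioi (0:ℝ)))))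
      = ∫⁻ s : Fin N → Fin 3 → ℝ, ∫⁻ V in Set.Ioi (0:ℝ), ∫⁻ p : Fin N → Fin 3 → ℝ,
          G (s, p, V) := by
    refine lintegral_congr fun s => ?_
    rw [lintegral_prod (fun q => G (s, q))
      ((show Measurable fun q : (Fin N → Fin 3 → ℝ) × ℝ => G (s, q) from
        hG.comp measurable_prodMk_left).aemeasurable)]
    refine lintegral_lintegral_swap ?_
    refine Measurable.aemeasurable ?_
    exact hG.comp ((measurable_const.prodMk (measurable_fst.prodMk measurable_snd)) :
      Measurable fun z : (Fin N → Fin 3 → ℝ) × ℝ => (s, z.1, z.2))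
  rw [hstep]
  refine lintegral_lintegral_swap ?_
  refine Measurable.aemeasurable ?_
  have : Measurable fun z : (Fin N → Fin 3 → ℝ) × ℝ =>
      ∫⁻ p : Fin N → Fin 3 → ℝ, G (z.1, p, z.2) := by
    refine Measurable.lintegral_prod_right
      (f := fun (z : (Fin N → Fin 3 → ℝ) × ℝ) (p : Fin N → Fin 3 → ℝ) =>
        G (z.1, p, z.2)) ?_
    exact hG.comp (measurable_fst.fst.prodMk (measurable_snd.prodMk measurable_fst.snd))
  exact this

set_option maxHeartbeats 2000000 in
/-- the extended Hamiltonian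
`ℋ(s,pˢ,V,p^V) = Σ_i V^{-2/3}|p_iˢ|²/(2m_i) + (p^V)²/(2M) + U(V^{1/3}s;V) + PV`
generates, under `exp(−βℋ) ds dpˢ dV dp^V`, the correct NPT marginal for
`(r,p,V)` with `r_i = V^{1/3}s_i`, `p_i = V^{-1/3}p_iˢ`: there is a constant
`c ∈ (0,∞)` (from integrating out `p^V`) such that for every measurable test
function `φ` of `(r,p,V)`, the extended-ensemble average equals `c` times the
average against `exp(−β(Σ|p_i|²/(2m_i) + U(r;V) + PV)) dr dp dV`. -/
theorem extended_hamiltonian_npt_marginal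
    (N : ℕ) (m : Fin N → ℝ) (hm : ∀ i, 0 < m i)
    (M β P : ℝ) (hM : 0 < M) (hβ : 0 < β)
    (U : (Fin N → Fin 3 → ℝ) → ℝ → ℝ)
    (hU : Measurable fun x : (Fin N → Fin 3 → ℝ) × ℝ => U x.1 x.2) :
    ∃ c : ℝ≥0∞, c ≠ 0 ∧ c ≠ ⊤ ∧
      ∀ φ : (Fin N → Fin 3 → ℝ) × (Fin N → Fin 3 → ℝ) × ℝ → ℝ≥0∞,
        Measurable φ →
        (∫⁻ x : ((Fin N → Fin 3 → ℝ) × (Fin N → Fin 3 → ℝ)) × ℝ × ℝ in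
            {x : ((Fin N → Fin 3 → ℝ) × (Fin N → Fin 3 → ℝ)) × ℝ × ℝ | 0 < x.2.1},
          ENNReal.ofReal (Real.exp (-β *
              ((∑ i, (x.2.1 ^ (-(2 : ℝ) / 3)) * (∑ j, (x.1.2 i j) ^ 2) / (2 * m i))
                + x.2.2 ^ 2 / (2 * M)
                + U (fun i => (x.2.1 ^ ((1 : ℝ) / 3)) • x.1.1 i) x.2.1
                + P * x.2.1)))
            * φ (fun i => (x.2.1 ^ ((1 : ℝ) / 3)) • x.1.1 i,
                 fun i => (x.2.1 ^ (-(1 : ℝ) / 3)) • x.1.2 i,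
                 x.2.1))
        = c * ∫⁻ y : (Fin N → Fin 3 → ℝ) × (Fin N → Fin 3 → ℝ) × ℝ in
            {y : (Fin N → Fin 3 → ℝ) × (Fin N → Fin 3 → ℝ) × ℝ | 0 < y.2.2},
          ENNReal.ofReal (Real.exp (-β *
              ((∑ i, (∑ j, (y.2.1 i j) ^ 2) / (2 * m i))
                + U y.1 y.2.2 + P * y.2.2))) * φ y := by
  have hgmeas : Measurable fun v : ℝ => ENNReal.ofReal (Real.exp (-β * (v ^ 2 / (2 * M)))) :=
    ENNReal.measurable_ofReal.comp (Real.measurable_exp.comp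
      (((measurable_id.pow_const 2).div_const _).const_mul _))
  have hc_top : (∫⁻ v : ℝ, ENNReal.ofReal (Real.exp (-β * (v ^ 2 / (2 * M))))) ≠ ⊤ := by
    have heq : (∫⁻ v : ℝ, ENNReal.ofReal (Real.exp (-β * (v ^ 2 / (2 * M)))))
        = ∫⁻ v : ℝ, ENNReal.ofReal (Real.exp (-(β / (2 * M)) * v ^ 2)) :=
      lintegral_congr fun v => by
        rw [show -β * (v ^ 2 / (2 * M)) = -(β / (2 * M)) * v ^ 2 by ring]
    rw [heq]
    exact (integrable_exp_neg_mul_sq (by positivity)).lintegral_lt_top.ne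
  have hc0 : (∫⁻ v : ℝ, ENNReal.ofReal (Real.exp (-β * (v ^ 2 / (2 * M))))) ≠ 0 := by
    intro h0
    rw [lintegral_eq_zero_iff hgmeas] at h0
    obtain ⟨v, hv⟩ := h0.exists
    exact (ENNReal.ofReal_pos.mpr (Real.exp_pos _)).ne' hv
  refine ⟨_, hc0, hc_top, ?_⟩
  intro φ hφ
  -- measurability of the "nice" integrand
  have hWm : Measurable fun z : ℝ × ((Fin N → Fin 3 → ℝ) × (Fin N → Fin 3 → ℝ)) =>
      ENNReal.ofReal (Real.exp (-β * ((∑ i, (∑ j, (z.2.2 i j) ^ 2) / (2 * m i))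
        + U z.2.1 z.1 + P * z.1))) * φ (z.2.1, z.2.2, z.1) := by
    refine Measurable.mul ?_ ?_
    · refine ENNReal.measurable_ofReal.comp (Real.measurable_exp.comp ?_)
      refine Measurable.const_mul ?_ _
      refine Measurable.add (Measurable.add ?_ ?_) ?_
      · refine Finset.measurable_sum _ fun i _ => ?_
        refine Measurable.div_const ?_ _
        refine Finset.measurable_sum _ fun j _ => ?_
        exact ((measurable_pi_apply j).comp
          ((measurable_pi_apply i).comp measurable_snd.snd)).pow_const 2
      · exact hU.comp (measurable_snd.fst.prodMk measurable_fst)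
      · exact measurable_fst.const_mul P
    · exact hφ.comp (measurable_snd.fst.prodMk (measurable_snd.snd.prodMk measurable_fst))
  -- measurability of the RHS integrand
  have hG : Measurable fun y : (Fin N → Fin 3 → ℝ) × (Fin N → Fin 3 → ℝ) × ℝ =>
      ENNReal.ofReal (Real.exp (-β * ((∑ i, (∑ j, (y.2.1 i j) ^ 2) / (2 * m i))
        + U y.1 y.2.2 + P * y.2.2))) * φ y := by
    have := hWm.comp ((measurable_snd.snd.prodMk (measurable_fst.prodMk measurable_snd.fst)) :
      Measurable fun y : (Fin N → Fin 3 → ℝ) × (Fin N → Fin 3 → ℝ) × ℝ => (y.2.2, y.1, y.2.1))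
    exact this
  -- measurability of the LHS integrand
  have hvec1 : Measurable fun x : ((Fin N → Fin 3 → ℝ) × (Fin N → Fin 3 → ℝ)) × ℝ × ℝ =>
      (fun i => (x.2.1 ^ ((1:ℝ)/3)) • x.1.1 i) := by
    refine measurable_pi_lambda _ fun i => ?_
    exact ((aux_rpow_meas _).comp measurable_snd.fst).smul
      ((measurable_pi_apply i).comp measurable_fst.fst)
  have hvec2 : Measurable fun x : ((Fin N → Fin 3 → ℝ) × (Fin N → Fin 3 → ℝ)) × ℝ × ℝ =>
      (fun i => (x.2.1 ^ (-(1:ℝ)/3)) • x.1.2 i) := by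
    refine measurable_pi_lambda _ fun i => ?_
    exact ((aux_rpow_meas _).comp measurable_snd.fst).smul
      ((measurable_pi_apply i).comp measurable_fst.snd)
  have hF : Measurable fun x : ((Fin N → Fin 3 → ℝ) × (Fin N → Fin 3 → ℝ)) × ℝ × ℝ =>
      ENNReal.ofReal (Real.exp (-β *
          ((∑ i, (x.2.1 ^ (-(2 : ℝ) / 3)) * (∑ j, (x.1.2 i j) ^ 2) / (2 * m i))
            + x.2.2 ^ 2 / (2 * M)
            + U (fun i => (x.2.1 ^ ((1 : ℝ) / 3)) • x.1.1 i) x.2.1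
            + P * x.2.1)))
        * φ (fun i => (x.2.1 ^ ((1 : ℝ) / 3)) • x.1.1 i,
             fun i => (x.2.1 ^ (-(1 : ℝ) / 3)) • x.1.2 i,
             x.2.1) := by
    refine Measurable.mul ?_ ?_
    · refine ENNReal.measurable_ofReal.comp (Real.measurable_exp.comp ?_)
      refine Measurable.const_mul ?_ _
      refine Measurable.add (Measurable.add (Measurable.add ?_ ?_) ?_) ?_
      · refine Finset.measurable_sum _ fun i _ => ?_
        refine Measurable.div_const ?_ _
        refine Measurable.mul ((aux_rpow_meas _).comp measurable_snd.fst) ?_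
        refine Finset.measurable_sum _ fun j _ => ?_
        exact ((measurable_pi_apply j).comp
          ((measurable_pi_apply i).comp measurable_fst.snd)).pow_const 2
      · exact (measurable_snd.snd.pow_const 2).div_const _
      · exact hU.comp (hvec1.prodMk measurable_snd.fst)
      · exact measurable_snd.fst.const_mul P
    · exact hφ.comp (hvec1.prodMk (hvec2.prodMk measurable_snd.fst))
  rw [lhs_core _ hF, rhs_core _ hG, ← lintegral_const_mul' _ _ hc_top]
  refine setLIntegral_congr_fun measurableSet_Ioi (fun V hV => ?_)
  have hV0 : (0:ℝ) < V := hV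
  have hapos : 0 < V ^ ((1:ℝ)/3) := Real.rpow_pos_of_pos hV0 _
  have hinv : V ^ (-(1:ℝ)/3) = (V ^ ((1:ℝ)/3))⁻¹ := by
    rw [show -(1:ℝ)/3 = -((1:ℝ)/3) by norm_num, Real.rpow_neg hV0.le]
  have hsq : ((V ^ ((1:ℝ)/3))⁻¹) ^ 2 = V ^ (-(2:ℝ)/3) := by
    rw [← hinv, ← Real.rpow_natCast (V ^ (-(1:ℝ)/3)) 2, ← Real.rpow_mul hV0.le]
    congr 1
    norm_num
  -- the "nice" integrand at fixed V, as a function of (r, p)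
  have hg : Measurable fun sp : (Fin N → Fin 3 → ℝ) × (Fin N → Fin 3 → ℝ) =>
      ENNReal.ofReal (Real.exp (-β * ((∑ i, (∑ j, (sp.2 i j) ^ 2) / (2 * m i))
        + U sp.1 V + P * V))) * φ (sp.1, sp.2, V) := by
    refine Measurable.mul ?_ ?_
    · refine ENNReal.measurable_ofReal.comp (Real.measurable_exp.comp ?_)
      refine Measurable.const_mul ?_ _
      refine Measurable.add (Measurable.add ?_ ?_) measurable_const
      · refine Finset.measurable_sum _ fun i _ => ?_
        refine Measurable.div_const ?_ _
        refine Finset.measurable_sum _ fun j _ => ?_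
        exact ((measurable_pi_apply j).comp
          ((measurable_pi_apply i).comp measurable_snd)).pow_const 2
      · exact hU.comp (measurable_fst.prodMk measurable_const)
    · exact hφ.comp (measurable_fst.prodMk (measurable_snd.prodMk measurable_const))
  have hpt : ∀ (sp : (Fin N → Fin 3 → ℝ) × (Fin N → Fin 3 → ℝ)) (w : ℝ),
      ENNReal.ofReal (Real.exp (-β *
          ((∑ i, (V ^ (-(2 : ℝ) / 3)) * (∑ j, (sp.2 i j) ^ 2) / (2 * m i))
            + w ^ 2 / (2 * M)
            + U (fun i => (V ^ ((1 : ℝ) / 3)) • sp.1 i) V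
            + P * V)))
        * φ (fun i => (V ^ ((1 : ℝ) / 3)) • sp.1 i,
             fun i => (V ^ (-(1 : ℝ) / 3)) • sp.2 i, V)
      = (ENNReal.ofReal (Real.exp (-β *
            ((∑ i, (∑ j, (((V ^ ((1:ℝ)/3))⁻¹ • sp.2) i j) ^ 2) / (2 * m i))
              + U ((V ^ ((1:ℝ)/3)) • sp.1) V + P * V)))
          * φ ((V ^ ((1:ℝ)/3)) • sp.1, (V ^ ((1:ℝ)/3))⁻¹ • sp.2, V))
          * ENNReal.ofReal (Real.exp (-β * (w ^ 2 / (2 * M)))) := by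
    intro sp w
    have e1 : (fun i => (V ^ ((1:ℝ)/3)) • sp.1 i) = (V ^ ((1:ℝ)/3)) • sp.1 := rfl
    have e2 : (fun i => (V ^ (-(1:ℝ)/3)) • sp.2 i) = (V ^ ((1:ℝ)/3))⁻¹ • sp.2 := by
      funext i; rw [hinv]; rfl
    have e3 : (∑ i, (V ^ (-(2:ℝ)/3)) * (∑ j, (sp.2 i j) ^ 2) / (2 * m i))
        = ∑ i, (∑ j, (((V ^ ((1:ℝ)/3))⁻¹ • sp.2) i j) ^ 2) / (2 * m i) := by
      refine Finset.sum_congr rfl fun i _ => ?_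
      have e4 : ∀ j : Fin 3, ((V ^ ((1:ℝ)/3))⁻¹ • sp.2) i j
          = (V ^ ((1:ℝ)/3))⁻¹ * sp.2 i j := fun j => rfl
      simp_rw [e4, mul_pow, hsq, ← Finset.mul_sum]
    rw [e1, e2, e3]
    rw [show -β * ((∑ i, (∑ j, (((V ^ ((1:ℝ)/3))⁻¹ • sp.2) i j) ^ 2) / (2 * m i))
          + w ^ 2 / (2 * M) + U ((V ^ ((1:ℝ)/3)) • sp.1) V + P * V)
        = -β * ((∑ i, (∑ j, (((V ^ ((1:ℝ)/3))⁻¹ • sp.2) i j) ^ 2) / (2 * m i))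
          + U ((V ^ ((1:ℝ)/3)) • sp.1) V + P * V) + -β * (w ^ 2 / (2 * M)) by ring]
    rw [Real.exp_add, ENNReal.ofReal_mul (Real.exp_nonneg _), mul_right_comm]
  refine Eq.trans (lintegral_congr fun sp => lintegral_congr fun w => hpt sp w) ?_
  refine Eq.trans (lintegral_congr fun sp => lintegral_const_mul _ hgmeas) ?_
  refine Eq.trans (lintegral_congr fun sp => mul_comm _ _) ?_
  rw [lintegral_const_mul' _ _ hc_top]
  congr 1
  have hsplit : (∫⁻ sp : (Fin N → Fin 3 → ℝ) × (Fin N → Fin 3 → ℝ),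
        ENNReal.ofReal (Real.exp (-β *
            ((∑ i, (∑ j, (((V ^ ((1:ℝ)/3))⁻¹ • sp.2) i j) ^ 2) / (2 * m i))
              + U ((V ^ ((1:ℝ)/3)) • sp.1) V + P * V)))
          * φ ((V ^ ((1:ℝ)/3)) • sp.1, (V ^ ((1:ℝ)/3))⁻¹ • sp.2, V))
      = ∫⁻ s, ∫⁻ p, ENNReal.ofReal (Real.exp (-β *
            ((∑ i, (∑ j, (((V ^ ((1:ℝ)/3))⁻¹ • p) i j) ^ 2) / (2 * m i))
              + U ((V ^ ((1:ℝ)/3)) • s) V + P * V)))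
          * φ ((V ^ ((1:ℝ)/3)) • s, (V ^ ((1:ℝ)/3))⁻¹ • p, V) := by
    rw [Measure.volume_eq_prod]
    exact lintegral_prod _ ((hg.comp
      ((measurable_fst.const_smul (V ^ ((1:ℝ)/3))).prodMk
        (measurable_snd.const_smul (V ^ ((1:ℝ)/3))⁻¹))).aemeasurable)
  exact hsplit.trans (aux_scale2 _ hg hapos)
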